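/- Parallel correctness of the efficient instantiation algorithm. Let expr_G be a symbolic multidimensional expression satisfying the assumptions of Lemmas 1 and 2, fix an index k ∈ {1,…,N}, and let {P_1,…,P_M} be a partition of space(g_k). For each worker i ∈ {1,…,M}, let the data partition consist of, for every set S_j* whose index tuples contain the placeholder g_k, the subset of tuples of S_j* whose g_k-component lies in P_i. Then: (i) the constraint rows produced by the context-passing instantiation algorithm (Algorithm 2) run by worker i are exactly the rows of the full constraint matrix indexed by global tuples G* with g*_k ∈ P_i; (ii) distinct workers produce rows for disjoint sets of global index tuples; and (iii) the union of the M workers' outputs equals the constraint matrix produced by running Algorithm 2 on the full data S*. -/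

import Mathlib

/-- A symbolic multidimensional expression tree.  Leaf nodes are *terms*, consisting of
a rational coefficient and a variable whose indices are determined (as functions) by the
values of the index placeholders recorded in a context `ℕ → Option V`.  Non-leaf nodes are
binary add/subtract operators and unary sum operators; a sum operator carries its logical
condition `(Gk ‖ Lk) ∈ data`, where `Gk` is the tuple of global index placeholders,
`Lk` the tuple of local index placeholders, and `data` the instantiating finite set of
index tuples. -/
inductive GExpr (V Var : Type) : Type where
  | term (coef : (ℕ → Option V) → ℚ) (var : (ℕ → Option V) → Var) : GExpr V Var
  | add (l r : GExpr V Var) : GExpr V Var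
  | sub (l r : GExpr V Var) : GExpr V Var
  | sum (Gk Lk : List ℕ) (data : Finset (List V)) (body : GExpr V Var) : GExpr V Var

variable {V Var : Type}

/-- Extend a context by binding the placeholder names `names` to the values `vals`
(componentwise). -/
def bindCtx (ctx : ℕ → Option V) (names : List ℕ) (vals : List V) : ℕ → Option V :=
  fun p => match (names.zip vals).find? (fun q => q.1 == p) with
    | some q => some q.2
    | none => ctx p

/-- `agreesB ctx names vals` holds iff the value tuple `vals` agrees with the context `ctx`
on every placeholder of `names` that is already bound in `ctx`. -/
def agreesB [DecidableEq V] (ctx : ℕ → Option V) (names : List ℕ) (vals : List V) : Bool :=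
  (names.zip vals).all (fun q => match ctx q.1 with
    | some a => decide (q.2 = a)
    | none => true)

/-- Algorithm 1 (exhaustive instantiation), evaluation of one row: given a context that binds
all global index placeholders to a concrete tuple `G*`, evaluate the expression tree to the
linear expression `expr_{G*}`, represented as the function assigning to each variable its
coefficient.  A sum operator is evaluated as the sum of its operand over all tuples of its
set data whose `Gk`-components equal the corresponding components of `G*`, with the
`Lk`-components bound as the values of the local index placeholders. -/
def evalFull [DecidableEq V] [DecidableEq Var] :
    GExpr V Var → (ℕ → Option V) → Var → ℚ
  | .term c v, ctx => fun w => if w = v ctx then c ctx else 0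
  | .add l r, ctx => fun w => evalFull l ctx w + evalFull r ctx w
  | .sub l r, ctx => fun w => evalFull l ctx w - evalFull r ctx w
  | .sum Gk Lk data body, ctx => fun w =>
      ∑ tup ∈ data.filter (fun tup => agreesB ctx Gk (tup.take Gk.length) = true),
        evalFull body (bindCtx ctx (Gk ++ Lk) tup) w

/-- Algorithm 2 (context-passing instantiation), with aggregation of tagged terms built in:
starting from a (partial) context, traverse the tree once; at a sum operator iterate over
those tuples of the set data that agree with the context on the already-bound placeholders
of `Gk`, extending the context by the bindings `Gk := Gk*`, `Lk := Lk*`; at a subtract node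
negate the right operand's terms; at a leaf emit the term tagged with the context's values
of all global placeholders `Glist`.  `evalTagged Glist e ctx tag w` is the aggregated
coefficient of variable `w` in the constraint row indexed by `tag`. -/
def evalTagged [DecidableEq V] [DecidableEq Var] (Glist : List ℕ) :
    GExpr V Var → (ℕ → Option V) → List (Option V) → Var → ℚ
  | .term c v, ctx => fun tag w => if tag = Glist.map ctx ∧ w = v ctx then c ctx else 0
  | .add l r, ctx => fun tag w => evalTagged Glist l ctx tag w + evalTagged Glist r ctx tag w
  | .sub l r, ctx => fun tag w => evalTagged Glist l ctx tag w - evalTagged Glist r ctx tag w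
  | .sum Gk Lk data body, ctx => fun tag w =>
      ∑ tup ∈ data.filter (fun tup => agreesB ctx Gk (tup.take Gk.length) = true),
        evalTagged Glist body (bindCtx ctx (Gk ++ Lk) tup) tag w

/-- `spaceTuples sp names` is `space(G)` for the tuple `names` of placeholders: the finite
set of tuples whose `j`-th component ranges over the admissible values `sp (names j)`. -/
def spaceTuples [DecidableEq V] (sp : ℕ → Finset V) : List ℕ → Finset (List V)
  | [] => {[]}
  | g :: gs => ((sp g) ×ˢ spaceTuples sp gs).image (fun p => p.1 :: p.2)

/-- The full context binding the global placeholders `Glist` to the concrete tuple `Gstar`. -/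
def fullCtx (Glist : List ℕ) (Gstar : List V) : ℕ → Option V :=
  bindCtx (fun _ => none) Glist Gstar

/-- One-hole contexts for expression trees, used to designate the position of a node. -/
inductive GCtx (V Var : Type) : Type where
  | hole : GCtx V Var
  | addL (c : GCtx V Var) (r : GExpr V Var) : GCtx V Var
  | addR (l : GExpr V Var) (c : GCtx V Var) : GCtx V Var
  | subL (c : GCtx V Var) (r : GExpr V Var) : GCtx V Var
  | subR (l : GExpr V Var) (c : GCtx V Var) : GCtx V Var
  | sumC (Gk Lk : List ℕ) (data : Finset (List V)) (c : GCtx V Var) : GCtx V Var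

/-- Plug an expression into the hole of a one-hole context. -/
def GCtx.plug : GCtx V Var → GExpr V Var → GExpr V Var
  | .hole, e => e
  | .addL c r, e => .add (c.plug e) r
  | .addR l c, e => .add l (c.plug e)
  | .subL c r, e => .sub (c.plug e) r
  | .subR l c, e => .sub l (c.plug e)
  | .sumC Gk Lk d c, e => .sum Gk Lk d (c.plug e)

/-- The path from the hole to the root contains no sum operator. -/
def GCtx.noSum : GCtx V Var → Prop
  | .hole => True
  | .addL c _ => c.noSum
  | .addR _ c => c.noSum
  | .subL c _ => c.noSum
  | .subR _ c => c.noSum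
  | .sumC _ _ _ _ => False

/-- The global index placeholder tuples `Gk` of the sum operators on the path from the
hole to the root. -/
def GCtx.spineGks : GCtx V Var → List (List ℕ)
  | .hole => []
  | .addL c _ => c.spineGks
  | .addR _ c => c.spineGks
  | .subL c _ => c.spineGks
  | .subR _ c => c.spineGks
  | .sumC Gk _ _ c => Gk :: c.spineGks

/-- Every path from a leaf node to the root passes through at least one sum operator
(the assumption justified by Lemma 1). -/
def GExpr.allUnderSum : GExpr V Var → Prop
  | .term _ _ => False
  | .add l r => l.allUnderSum ∧ r.allUnderSum
  | .sub l r => l.allUnderSum ∧ r.allUnderSum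
  | .sum _ _ _ _ => True

/-- Well-formedness of a symbolic expression w.r.t. the global placeholder tuple `Glist`:
at every sum operator, `Gk` is a tuple of placeholders from `Glist`, the local placeholders
`Lk` are disjoint from the globals, both tuples consist of distinct placeholders, and every
tuple of the set data has length `|Gk| + |Lk|`. -/
def GExpr.wf (Glist : List ℕ) : GExpr V Var → Prop
  | .term _ _ => True
  | .add l r => l.wf Glist ∧ r.wf Glist
  | .sub l r => l.wf Glist ∧ r.wf Glist
  | .sum Gk Lk data body =>
      (∀ g ∈ Gk, g ∈ Glist) ∧ (∀ l ∈ Lk, l ∉ Glist) ∧ Gk.Nodup ∧ Lk.Nodup ∧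
      (∀ tup ∈ data, tup.length = Gk.length + Lk.length) ∧ body.wf Glist

/-- For every leaf node, the union of the global placeholder tuples `Gk` of the sum
operators on its path to the root covers all of `Glist` (the assumption justified by
Lemma 2); `acc` accumulates the globals bound so far. -/
def GExpr.covers (Glist : List ℕ) : GExpr V Var → List ℕ → Prop
  | .term _ _, acc => ∀ g ∈ Glist, g ∈ acc
  | .add l r, acc => l.covers Glist acc ∧ r.covers Glist acc
  | .sub l r, acc => l.covers Glist acc ∧ r.covers Glist acc
  | .sum Gk _ _ body, acc => body.covers Glist (acc ++ Gk)

/-- Lemma 2's data expansion: replace every tuple of `data` by all its expansions inserting,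
after the first `nG` (global) components, one value from `vals`. -/
def expandData [DecidableEq V] (data : Finset (List V)) (nG : ℕ) (vals : Finset V) :
    Finset (List V) :=
  (data ×ˢ vals).image (fun p => p.1.take nG ++ p.2 :: p.1.drop nG)

/-- Proposition 2's data restriction w.r.t. the global placeholder `gk` and the admissible
subset `P`: every set data whose index tuples contain the placeholder `gk` is replaced by
its subset of tuples whose `gk`-component lies in `P`. -/
def GExpr.restrict [DecidableEq V] (gk : ℕ) (P : Finset V) : GExpr V Var → GExpr V Var
  | .term c v => .term c v
  | .add l r => .add (l.restrict gk P) (r.restrict gk P)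
  | .sub l r => .sub (l.restrict gk P) (r.restrict gk P)
  | .sum Gk Lk data body =>
      if gk ∈ Gk ++ Lk then
        .sum Gk Lk
          (data.filter (fun tup => ((tup[(Gk ++ Lk).idxOf gk]?).any fun a => decide (a ∈ P)) = true))
          (body.restrict gk P)
      else .sum Gk Lk data (body.restrict gk P)

section Helpers

lemma bindCtx_not_mem (ctx : ℕ → Option V) (names : List ℕ) (vals : List V) (g : ℕ)
    (h : g ∉ names) : bindCtx ctx names vals g = ctx g := by
  have hfind : (names.zip vals).find? (fun q => q.1 == g) = none := by
    rw [List.find?_eq_none]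
    intro q hq hb
    rw [beq_iff_eq] at hb
    exact h (hb ▸ (List.of_mem_zip hq).1)
  simp [bindCtx, hfind]

lemma bindCtx_mem (ctx : ℕ → Option V) :
    ∀ (names : List ℕ) (vals : List V) (g : ℕ), g ∈ names → names.length ≤ vals.length →
      bindCtx ctx names vals g = vals[names.idxOf g]? := by
  intro names
  induction names with
  | nil => intro _ g hg _; simp at hg
  | cons n ns ih =>
    intro vals g hg hlen
    cases vals with
    | nil => simp at hlen
    | cons v vs =>
      simp only [List.length_cons, Nat.succ_le_succ_iff] at hlen
      by_cases h : (n == g) = true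
      · simp [bindCtx, List.zip_cons_cons, List.find?_cons_of_pos h, List.idxOf_cons, h]
      · have hg' : g ∈ ns := by
          rcases List.mem_cons.mp hg with h' | h'
          · exact absurd (by simp [h']) h
          · exact h'
        have hfind : List.find? (fun q : ℕ × V => q.1 == g) ((n, v) :: ns.zip vs)
            = List.find? (fun q : ℕ × V => q.1 == g) (ns.zip vs) :=
          List.find?_cons_of_neg (by simpa using h)
        have hrec := ih vs g hg' hlen
        simp only [bindCtx] at hrec ⊢
        rw [List.zip_cons_cons, hfind]
        simp only [List.idxOf_cons, h, cond_false, List.getElem?_cons_succ]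
        exact hrec

lemma agreesB_getElem [DecidableEq V] (ctx : ℕ → Option V) (names : List ℕ)
    (vals : List V) (h : agreesB ctx names vals = true)
    (j : ℕ) (hj1 : j < names.length) (hj2 : j < vals.length)
    (b : V) (hb : ctx names[j] = some b) : vals[j] = b := by
  have hjz : j < (names.zip vals).length := by simp [List.length_zip]; omega
  have hmem : (names[j], vals[j]) ∈ names.zip vals := by
    have hz : (names.zip vals)[j] = (names[j], vals[j]) := List.getElem_zip ..
    exact hz ▸ List.getElem_mem hjz
  have := List.all_eq_true.mp h _ hmem
  simp only [hb] at this
  exact of_decide_eq_true this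

lemma bind_val_idx [DecidableEq V] (ctx : ℕ → Option V) (Gk Lk : List ℕ) (tup : List V)
    (gk : ℕ) (hg : gk ∈ Gk ++ Lk) (hlen : tup.length = Gk.length + Lk.length) :
    bindCtx ctx (Gk ++ Lk) tup gk = tup[(Gk ++ Lk).idxOf gk]? :=
  bindCtx_mem ctx _ _ _ hg (by simp [hlen])

lemma bind_val_of_agrees [DecidableEq V] (ctx : ℕ → Option V) (Gk Lk : List ℕ) (tup : List V)
    (gk : ℕ) (hG : gk ∈ Gk)
    (hlen : tup.length = Gk.length + Lk.length)
    (hag : agreesB ctx Gk (tup.take Gk.length) = true)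
    (b : V) (hb : ctx gk = some b) :
    bindCtx ctx (Gk ++ Lk) tup gk = some b := by
  rw [bind_val_idx ctx Gk Lk tup gk (List.mem_append.mpr (Or.inl hG)) hlen,
    List.idxOf_append_of_mem hG]
  set j := Gk.idxOf gk with hjdef
  have hj : j < Gk.length := List.idxOf_lt_length_iff.mpr hG
  have hjt : j < tup.length := by omega
  have hjtk : j < (tup.take Gk.length).length := by
    simp [List.length_take, hlen]; omega
  have hname : Gk[j] = gk := List.getElem_idxOf hj
  have hval : (tup.take Gk.length)[j] = b :=
    agreesB_getElem ctx Gk (tup.take Gk.length) hag j hj hjtk b (by rw [hname]; exact hb)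
  have htk : (tup.take Gk.length)[j] = tup[j] := List.getElem_take ..
  rw [List.getElem?_eq_getElem hjt, ← htk, hval]

lemma GExpr.wf_restrict [DecidableEq V] (gk : ℕ) (P : Finset V) (Glist : List ℕ) :
    ∀ e : GExpr V Var, e.wf Glist → (e.restrict gk P).wf Glist := by
  intro e
  induction e with
  | term c v => intro h; exact h
  | add l r ihl ihr => intro h; exact ⟨ihl h.1, ihr h.2⟩
  | sub l r ihl ihr => intro h; exact ⟨ihl h.1, ihr h.2⟩
  | sum Gk Lk data body ih =>
    intro h
    obtain ⟨h1, h2, h3, h4, h5, h6⟩ := h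
    unfold GExpr.restrict
    split
    · exact ⟨h1, h2, h3, h4, fun tup ht => h5 tup (Finset.mem_of_mem_filter _ ht), ih h6⟩
    · exact ⟨h1, h2, h3, h4, h5, ih h6⟩

/-- Claim C: if the context binds `g_k` to a value different from the tag's `k`-component,
the context-passing algorithm contributes nothing to that row. -/
lemma evalTagged_eq_zero [DecidableEq V] [DecidableEq Var] (Glist : List ℕ)
    (k : ℕ) (hk : k < Glist.length) (tag : List (Option V)) (w : Var) (b : V)
    (hne : tag[k]? ≠ some (some b)) :
    ∀ (e : GExpr V Var), e.wf Glist → ∀ ctx : ℕ → Option V, ctx Glist[k] = some b →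
      evalTagged Glist e ctx tag w = 0 := by
  intro e
  induction e with
  | term c v =>
    intro _ ctx hctx
    simp only [evalTagged]
    rw [if_neg]
    rintro ⟨h1, -⟩
    apply hne
    rw [h1, List.getElem?_map, List.getElem?_eq_getElem hk]
    simp [hctx]
  | add l r ihl ihr =>
    intro hwf ctx hctx
    simp [evalTagged, ihl hwf.1 ctx hctx, ihr hwf.2 ctx hctx]
  | sub l r ihl ihr =>
    intro hwf ctx hctx
    simp [evalTagged, ihl hwf.1 ctx hctx, ihr hwf.2 ctx hctx]
  | sum Gk Lk data body ih =>
    intro hwf ctx hctx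
    obtain ⟨h1, h2, h3, h4, h5, h6⟩ := hwf
    simp only [evalTagged]
    apply Finset.sum_eq_zero
    intro tup htup
    rw [Finset.mem_filter] at htup
    apply ih h6
    have hmem : Glist[k] ∈ Glist := List.getElem_mem hk
    by_cases hG : Glist[k] ∈ Gk
    · exact bind_val_of_agrees ctx Gk Lk tup _ hG (h5 _ htup.1) htup.2 b hctx
    · have hL : Glist[k] ∉ Lk := fun hl => h2 _ hl hmem
      rw [bindCtx_not_mem _ _ _ _ (by simp [hG, hL])]
      exact hctx

/-- Claim A: the worker's restricted run produces zero for rows whose `g_k`-component is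
outside its part `P`. -/
lemma evalTagged_restrict_eq_zero [DecidableEq V] [DecidableEq Var] (Glist : List ℕ)
    (k : ℕ) (hk : k < Glist.length) (P : Finset V) (tag : List (Option V)) (w : Var)
    (a : V) (htag : tag[k]? = some (some a)) (ha : a ∉ P) :
    ∀ (e : GExpr V Var), e.wf Glist → ∀ ctx : ℕ → Option V,
      (ctx Glist[k] = none ∨ ∃ b ∈ P, ctx Glist[k] = some b) →
      evalTagged Glist (e.restrict Glist[k] P) ctx tag w = 0 := by
  intro e
  induction e with
  | term c v =>
    intro _ ctx hctx
    simp only [GExpr.restrict, evalTagged]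
    rw [if_neg]
    rintro ⟨h1, -⟩
    have : tag[k]? = some (ctx Glist[k]) := by
      rw [h1, List.getElem?_map, List.getElem?_eq_getElem hk, Option.map_some]
    rw [htag] at this
    rcases hctx with h | ⟨b, hb, h⟩
    · rw [h] at this; simp at this
    · rw [h] at this
      obtain rfl : a = b := by simpa using this
      exact ha hb
  | add l r ihl ihr =>
    intro hwf ctx hctx
    simp [GExpr.restrict, evalTagged, ihl hwf.1 ctx hctx, ihr hwf.2 ctx hctx]
  | sub l r ihl ihr =>
    intro hwf ctx hctx
    simp [GExpr.restrict, evalTagged, ihl hwf.1 ctx hctx, ihr hwf.2 ctx hctx]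
  | sum Gk Lk data body ih =>
    intro hwf ctx hctx
    obtain ⟨h1, h2, h3, h4, h5, h6⟩ := hwf
    unfold GExpr.restrict
    split
    case isTrue hin =>
      simp only [evalTagged]
      apply Finset.sum_eq_zero
      intro tup htup
      rw [Finset.mem_filter] at htup
      have htup2 := Finset.mem_filter.mp htup.1
      have hdata := htup2.1
      have hlen := h5 _ hdata
      have hidx : (Gk ++ Lk).idxOf Glist[k] < tup.length := by
        rw [hlen, ← List.length_append]
        exact List.idxOf_lt_length_iff.mpr hin
      obtain ⟨c, hc⟩ : ∃ c, tup[(Gk ++ Lk).idxOf Glist[k]]? = some c :=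
        ⟨_, List.getElem?_eq_getElem hidx⟩
      have hcP : c ∈ P := by
        have := htup2.2
        rw [hc] at this
        simpa using this
      apply ih h6
      right
      exact ⟨c, hcP, by rw [bind_val_idx ctx Gk Lk tup _ hin hlen, hc]⟩
    case isFalse hin =>
      simp only [evalTagged]
      apply Finset.sum_eq_zero
      intro tup htup
      apply ih h6
      rwa [bindCtx_not_mem _ _ _ _ hin]

/-- Claim B: the worker's restricted run agrees with the full run on rows whose
`g_k`-component lies in its part `P`. -/
lemma evalTagged_restrict_eq [DecidableEq V] [DecidableEq Var] (Glist : List ℕ)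
    (k : ℕ) (hk : k < Glist.length) (P : Finset V) (tag : List (Option V)) (w : Var)
    (a : V) (htag : tag[k]? = some (some a)) (ha : a ∈ P) :
    ∀ (e : GExpr V Var), e.wf Glist → ∀ ctx : ℕ → Option V,
      (ctx Glist[k] = none ∨ ctx Glist[k] = some a) →
      evalTagged Glist (e.restrict Glist[k] P) ctx tag w =
        evalTagged Glist e ctx tag w := by
  intro e
  induction e with
  | term c v => intro _ _ _; rfl
  | add l r ihl ihr =>
    intro hwf ctx hctx
    simp [GExpr.restrict, evalTagged, ihl hwf.1 ctx hctx, ihr hwf.2 ctx hctx]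
  | sub l r ihl ihr =>
    intro hwf ctx hctx
    simp [GExpr.restrict, evalTagged, ihl hwf.1 ctx hctx, ihr hwf.2 ctx hctx]
  | sum Gk Lk data body ih =>
    intro hwf ctx hctx
    obtain ⟨h1, h2, h3, h4, h5, h6⟩ := hwf
    unfold GExpr.restrict
    split
    case isTrue hin =>
      simp only [evalTagged]
      rw [Finset.filter_comm]
      rw [Finset.sum_filter]
      rw [Finset.sum_congr rfl (g := fun tup =>
        evalTagged Glist body (bindCtx ctx (Gk ++ Lk) tup) tag w)]
      intro tup htup
      rw [Finset.mem_filter] at htup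
      have hdata := htup.1
      have hlen := h5 _ hdata
      have hidx : (Gk ++ Lk).idxOf Glist[k] < tup.length := by
        rw [hlen, ← List.length_append]
        exact List.idxOf_lt_length_iff.mpr hin
      obtain ⟨c, hc⟩ : ∃ c, tup[(Gk ++ Lk).idxOf Glist[k]]? = some c :=
        ⟨_, List.getElem?_eq_getElem hidx⟩
      have hbind : bindCtx ctx (Gk ++ Lk) tup Glist[k] = some c := by
        rw [bind_val_idx ctx Gk Lk tup _ hin hlen, hc]
      by_cases hcP : c ∈ P
      · rw [if_pos (by rw [hc]; simpa using hcP)]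
        by_cases hca : c = a
        · subst hca
          exact ih h6 _ (Or.inr hbind)
        · have hne : tag[k]? ≠ some (some c) := by
            rw [htag]; intro h; exact hca (by simpa using h.symm)
          rw [evalTagged_eq_zero Glist k hk tag w c hne _
              (GExpr.wf_restrict _ _ _ _ h6) _ hbind,
            evalTagged_eq_zero Glist k hk tag w c hne _ h6 _ hbind]
      · rw [if_neg (by rw [hc]; simpa using hcP)]
        have hca : c ≠ a := fun h => hcP (h ▸ ha)
        have hne : tag[k]? ≠ some (some c) := by
          rw [htag]; intro h; exact hca (by simpa using h.symm)
        rw [evalTagged_eq_zero Glist k hk tag w c hne _ h6 _ hbind]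
    case isFalse hin =>
      simp only [evalTagged]
      apply Finset.sum_congr rfl
      intro tup htup
      apply ih h6
      rwa [bindCtx_not_mem _ _ _ _ hin]

lemma spaceTuples_spec [DecidableEq V] (sp : ℕ → Finset V) :
    ∀ (names : List ℕ) (l : List V), l ∈ spaceTuples sp names →
      l.length = names.length ∧
        ∀ j, ∀ v : V, l[j]? = some v → ∀ h : j < names.length, v ∈ sp names[j] := by
  intro names
  induction names with
  | nil =>
    intro l hl
    simp only [spaceTuples, Finset.mem_singleton] at hl
    subst hl
    exact ⟨rfl, by intro j v h; simp at h⟩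
  | cons g gs ih =>
    intro l hl
    simp only [spaceTuples, Finset.mem_image, Finset.mem_product] at hl
    obtain ⟨⟨v0, t⟩, ⟨hv0, ht⟩, rfl⟩ := hl
    obtain ⟨hlen, hall⟩ := ih t ht
    refine ⟨by simp [hlen], ?_⟩
    intro j v hv hj
    cases j with
    | zero => simp at hv; subst hv; simpa using hv0
    | succ j =>
      simp only [List.getElem?_cons_succ] at hv
      simp only [List.length_cons, Nat.succ_lt_succ_iff] at hj
      simpa using hall j v hv hj

end Helpers

/-- **Parallel correctness of the efficient instantiation algorithm.**  Let `e` be a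
symbolic multidimensional expression with global placeholder tuple `Glist` satisfying the
assumptions of Lemmas 1 and 2 (`e.allUnderSum`, `e.covers Glist []`, well-formedness
`e.wf Glist`).  Fix a position `k` of the global tuple (placeholder `g_k = Glist.get k`)
and let `P 1, …, P M` be a partition of `space(g_k) = sp (Glist.get k)` into pairwise
disjoint subsets.  Worker `i` runs the context-passing instantiation algorithm
(Algorithm 2) on the data partition `e.restrict (Glist.get k) (P i)` in which every set
data whose index tuples contain `g_k` is replaced by its subset of tuples whose
`g_k`-component lies in `P i`.  Then:
(i) the constraint rows produced by worker `i` are exactly the rows of the full constraint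
matrix indexed by global tuples `G*` with `G*_k ∈ P i` (and worker `i` produces zero rows
for tuples with `G*_k ∉ P i`);
(ii) distinct workers produce (nonzero) rows for disjoint sets of global index tuples; and
(iii) the union (sum) of the `M` workers' outputs equals the constraint matrix produced by
running Algorithm 2 on the full data. -/
theorem parallel_instantiation_correct [DecidableEq V] [DecidableEq Var]
    (sp : ℕ → Finset V) (Glist : List ℕ) (hnd : Glist.Nodup)
    (e : GExpr V Var) (hwf : e.wf Glist) (hsum : e.allUnderSum)
    (hcov : e.covers Glist [])
    (k : Fin Glist.length) (M : ℕ) (P : Fin M → Finset V)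
    (hdisj : ∀ i j : Fin M, i ≠ j → Disjoint (P i) (P j))
    (hcover : (Finset.univ : Finset (Fin M)).biUnion P = sp (Glist.get k)) :
    (∀ i : Fin M, ∀ Gstar ∈ spaceTuples sp Glist, ∀ a : V, Gstar[(k : ℕ)]? = some a →
        (a ∈ P i → ∀ w : Var,
            evalTagged Glist (e.restrict (Glist.get k) (P i)) (fun _ => none)
                (Gstar.map some) w =
              evalTagged Glist e (fun _ => none) (Gstar.map some) w) ∧
        (a ∉ P i → ∀ w : Var,
            evalTagged Glist (e.restrict (Glist.get k) (P i)) (fun _ => none)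
                (Gstar.map some) w = 0)) ∧
    (∀ i j : Fin M, i ≠ j → ∀ Gstar ∈ spaceTuples sp Glist,
        (∃ w : Var,
            evalTagged Glist (e.restrict (Glist.get k) (P i)) (fun _ => none)
              (Gstar.map some) w ≠ 0) →
        ∀ w : Var,
          evalTagged Glist (e.restrict (Glist.get k) (P j)) (fun _ => none)
            (Gstar.map some) w = 0) ∧
    (∀ Gstar ∈ spaceTuples sp Glist, ∀ w : Var,
        ∑ i : Fin M,
            evalTagged Glist (e.restrict (Glist.get k) (P i)) (fun _ => none)
              (Gstar.map some) w =
          evalTagged Glist e (fun _ => none) (Gstar.map some) w) := by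
  classical
  have hk : (k : ℕ) < Glist.length := k.isLt
  simp only [List.get_eq_getElem] at hcover ⊢
  have key : ∀ Gstar ∈ spaceTuples sp Glist, ∀ a : V, Gstar[(k : ℕ)]? = some a →
      (Gstar.map some)[(k : ℕ)]? = some (some a) ∧ a ∈ sp Glist[(k : ℕ)] := by
    intro Gstar hmem a hGa
    refine ⟨by rw [List.getElem?_map, hGa, Option.map_some], ?_⟩
    exact (spaceTuples_spec sp Glist Gstar hmem).2 k a hGa hk
  refine ⟨?_, ?_, ?_⟩
  · intro i Gstar hmem a hGa
    obtain ⟨htag, hsp⟩ := key Gstar hmem a hGa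
    constructor
    · intro haP w
      exact evalTagged_restrict_eq Glist k hk (P i) _ w a htag haP e hwf _ (Or.inl rfl)
    · intro haP w
      exact evalTagged_restrict_eq_zero Glist k hk (P i) _ w a htag haP e hwf _ (Or.inl rfl)
  · intro i j hij Gstar hmem hne w
    have hlen := (spaceTuples_spec sp Glist Gstar hmem).1
    have hklt : (k : ℕ) < Gstar.length := by omega
    set a := Gstar[(k : ℕ)] with ha
    have hGa : Gstar[(k : ℕ)]? = some a := List.getElem?_eq_getElem hklt
    obtain ⟨htag, hsp⟩ := key Gstar hmem a hGa
    have haPi : a ∈ P i := by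
      by_contra hnot
      obtain ⟨w0, hw0⟩ := hne
      exact hw0
        (evalTagged_restrict_eq_zero Glist k hk (P i) _ w0 a htag hnot e hwf _ (Or.inl rfl))
    have haPj : a ∉ P j := fun h => (Finset.disjoint_left.mp (hdisj i j hij) haPi) h
    exact evalTagged_restrict_eq_zero Glist k hk (P j) _ w a htag haPj e hwf _ (Or.inl rfl)
  · intro Gstar hmem w
    have hlen := (spaceTuples_spec sp Glist Gstar hmem).1
    have hklt : (k : ℕ) < Gstar.length := by omega
    set a := Gstar[(k : ℕ)] with ha
    have hGa : Gstar[(k : ℕ)]? = some a := List.getElem?_eq_getElem hklt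
    obtain ⟨htag, hsp⟩ := key Gstar hmem a hGa
    rw [← hcover] at hsp
    obtain ⟨i0, -, hi0⟩ := Finset.mem_biUnion.mp hsp
    rw [Finset.sum_eq_single_of_mem i0 (Finset.mem_univ i0)]
    · exact evalTagged_restrict_eq Glist k hk (P i0) _ w a htag hi0 e hwf _ (Or.inl rfl)
    · intro j _ hj
      have haPj : a ∉ P j := fun h => (Finset.disjoint_left.mp (hdisj j i0 hj) h) hi0
      exact evalTagged_restrict_eq_zero Glist k hk (P j) _ w a htag haPj e hwf _ (Or.inl rfl)
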